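/- Let K be a field with char K ≠ 2, let (V, c) be a braided vector space over K such that c is of Hecke type of mark λ with λ ≠ 0, λ ≠ 1 and (3)!_λ ≠ 0, and let b be a c-bracket on (V, c). If the canonical K-linear map ι_{c,b} : V → U(V, c, b) into the enveloping algebra is injective, then b = 0. -/

import Mathlib

open TensorProduct

noncomputable section

variable {K : Type*} [Field K] {V : Type*} [AddCommGroup V] [Module K V]

/-- The endomorphism `c ⊗ id_V` of `V ⊗ (V ⊗ V)` (transported along associativity). -/
def opC1 (c : V ⊗[K] V →ₗ[K] V ⊗[K] V) :
    V ⊗[K] (V ⊗[K] V) →ₗ[K] V ⊗[K] (V ⊗[K] V) :=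
  (TensorProduct.assoc K V V V).toLinearMap ∘ₗ
    LinearMap.rTensor V c ∘ₗ (TensorProduct.assoc K V V V).symm.toLinearMap

/-- The endomorphism `id_V ⊗ c` of `V ⊗ (V ⊗ V)`. -/
def opC2 (c : V ⊗[K] V →ₗ[K] V ⊗[K] V) :
    V ⊗[K] (V ⊗[K] V) →ₗ[K] V ⊗[K] (V ⊗[K] V) :=
  LinearMap.lTensor V c

/-- The map `b ⊗ id_V : V ⊗ (V ⊗ V) → V ⊗ V`. -/
def opB1 (b : V ⊗[K] V →ₗ[K] V) :
    V ⊗[K] (V ⊗[K] V) →ₗ[K] V ⊗[K] V :=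
  LinearMap.rTensor V b ∘ₗ (TensorProduct.assoc K V V V).symm.toLinearMap

/-- The map `id_V ⊗ b : V ⊗ (V ⊗ V) → V ⊗ V`. -/
def opB2 (b : V ⊗[K] V →ₗ[K] V) :
    V ⊗[K] (V ⊗[K] V) →ₗ[K] V ⊗[K] V :=
  LinearMap.lTensor V b

/-- The braid equation `c₁ ∘ c₂ ∘ c₁ = c₂ ∘ c₁ ∘ c₂`. -/
def BraidEq (c : V ⊗[K] V →ₗ[K] V ⊗[K] V) : Prop :=
  opC1 c ∘ₗ opC2 c ∘ₗ opC1 c = opC2 c ∘ₗ opC1 c ∘ₗ opC2 c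

/-- `c` is of Hecke type of mark `lam`: `(c + id) ∘ (c - lam • id) = 0`. -/
def IsHecke (lam : K) (c : V ⊗[K] V →ₗ[K] V ⊗[K] V) : Prop :=
  (c + LinearMap.id) ∘ₗ (c - lam • LinearMap.id) = 0

/-- `b` is a `c`-bracket: `c ∘ b₁ = b₂ ∘ c₁ ∘ c₂` and `c ∘ b₂ = b₁ ∘ c₂ ∘ c₁`. -/
def IsBracket (c : V ⊗[K] V →ₗ[K] V ⊗[K] V) (b : V ⊗[K] V →ₗ[K] V) : Prop :=
  c ∘ₗ opB1 b = opB2 b ∘ₗ opC1 c ∘ₗ opC2 c ∧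
  c ∘ₗ opB2 b = opB1 b ∘ₗ opC2 c ∘ₗ opC1 c

/-- The linear map `V ⊗ V → T(V)`, `v ⊗ w ↦ ι v * ι w`. -/
def tensMul : V ⊗[K] V →ₗ[K] TensorAlgebra K V :=
  LinearMap.mul' K (TensorAlgebra K V) ∘ₗ
    TensorProduct.map (TensorAlgebra.ι K) (TensorAlgebra.ι K)

/-- The relation on `T(V)` whose associated ring quotient is
`U(V,c,b) = T(V)/(c(z) - lam•z - b(z) : z ∈ V ⊗ V)`. -/
def envRel (lam : K) (c : V ⊗[K] V →ₗ[K] V ⊗[K] V) (b : V ⊗[K] V →ₗ[K] V) :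
    TensorAlgebra K V → TensorAlgebra K V → Prop :=
  fun x y => ∃ z : V ⊗[K] V,
    x = tensMul (c z) ∧ y = lam • tensMul z + TensorAlgebra.ι K (b z)

/-- The canonical map `ι_{c,b} : V → U(V,c,b)`. -/
def envIota (lam : K) (c : V ⊗[K] V →ₗ[K] V ⊗[K] V) (b : V ⊗[K] V →ₗ[K] V) :
    V →ₗ[K] RingQuot (envRel lam c b) :=
  (RingQuot.mkAlgHom K (envRel lam c b)).toLinearMap ∘ₗ TensorAlgebra.ι K

/-- The q-integer `(n)_lam = 1 + lam + ⋯ + lam^(n-1)`. -/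
def qInt (lam : K) (n : ℕ) : K := ∑ i ∈ Finset.range n, lam ^ i

/-- The q-factorial `(n)!_lam = (1)_lam (2)_lam ⋯ (n)_lam`. -/
def qFac (lam : K) (n : ℕ) : K := ∏ i ∈ Finset.range n, qInt lam (i + 1)

/-! ### Auxiliary lemmas -/

lemma heckeSq {lam : K} {c : V ⊗[K] V →ₗ[K] V ⊗[K] V} (h : IsHecke lam c) :
    c ∘ₗ c = (lam - 1) • c + lam • LinearMap.id := by
  have h' := h
  unfold IsHecke at h'
  have : c ∘ₗ c + c - lam • c - lam • LinearMap.id = 0 := by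
    rw [← h']
    ext x
    simp [LinearMap.comp_apply, smul_sub, sub_smul, smul_smul]
    module
  linear_combination (norm := module) this

lemma opC1_sq {lam : K} {c : V ⊗[K] V →ₗ[K] V ⊗[K] V}
    (hcc : c ∘ₗ c = (lam - 1) • c + lam • LinearMap.id)
    (x : V ⊗[K] (V ⊗[K] V)) :
    opC1 c (opC1 c x) = (lam - 1) • opC1 c x + lam • x := by
  have h1 : opC1 c ∘ₗ opC1 c = opC1 (c ∘ₗ c) := by
    unfold opC1
    rw [LinearMap.rTensor_comp]
    ext y
    simp [LinearMap.comp_apply]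
  have h2 : opC1 ((lam - 1) • c + lam • LinearMap.id)
      = (lam - 1) • opC1 c + lam • (LinearMap.id : V ⊗[K] (V ⊗[K] V) →ₗ[K] _) := by
    unfold opC1
    rw [LinearMap.rTensor_add, LinearMap.rTensor_smul, LinearMap.rTensor_smul,
      LinearMap.rTensor_id]
    ext y
    simp [LinearMap.comp_apply]
  have := congrArg (fun f => f x) (h1.trans (by rw [hcc, h2]))
  simpa [LinearMap.comp_apply] using this

lemma opC2_sq {lam : K} {c : V ⊗[K] V →ₗ[K] V ⊗[K] V}
    (hcc : c ∘ₗ c = (lam - 1) • c + lam • LinearMap.id)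
    (x : V ⊗[K] (V ⊗[K] V)) :
    opC2 c (opC2 c x) = (lam - 1) • opC2 c x + lam • x := by
  have h1 : opC2 c ∘ₗ opC2 c = opC2 (c ∘ₗ c) := (LinearMap.lTensor_comp V c c).symm
  have h2 : opC2 ((lam - 1) • c + lam • LinearMap.id)
      = (lam - 1) • opC2 c + lam • (LinearMap.id : V ⊗[K] (V ⊗[K] V) →ₗ[K] _) := by
    unfold opC2
    rw [LinearMap.lTensor_add, LinearMap.lTensor_smul, LinearMap.lTensor_smul,
      LinearMap.lTensor_id]
  have := congrArg (fun f => f x) (h1.trans (by rw [hcc, h2]))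
  simpa [LinearMap.comp_apply] using this

lemma opB1_c {c : V ⊗[K] V →ₗ[K] V ⊗[K] V} {b : V ⊗[K] V →ₗ[K] V}
    (hbc : b ∘ₗ c = -b) (x : V ⊗[K] (V ⊗[K] V)) :
    opB1 b (opC1 c x) = -(opB1 b x) := by
  have h1 : opB1 b ∘ₗ opC1 c = opB1 (b ∘ₗ c) := by
    unfold opB1 opC1
    rw [LinearMap.rTensor_comp]
    ext y
    simp [LinearMap.comp_apply]
  have h2 : opB1 (-b) = -(opB1 b) := by
    unfold opB1; ext y; simp [LinearMap.comp_apply]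
  have := congrArg (fun f => f x) (h1.trans (by rw [hbc, h2]))
  simpa [LinearMap.comp_apply] using this

lemma opB2_c {c : V ⊗[K] V →ₗ[K] V ⊗[K] V} {b : V ⊗[K] V →ₗ[K] V}
    (hbc : b ∘ₗ c = -b) (x : V ⊗[K] (V ⊗[K] V)) :
    opB2 b (opC2 c x) = -(opB2 b x) := by
  have h1 : opB2 b ∘ₗ opC2 c = opB2 (b ∘ₗ c) := (LinearMap.lTensor_comp V b c).symm
  have h2 : opB2 (-b) = -(opB2 b) := by
    unfold opB2; ext y; simp [LinearMap.comp_apply]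
  have := congrArg (fun f => f x) (h1.trans (by rw [hbc, h2]))
  simpa [LinearMap.comp_apply] using this

/-- Injectivity of the canonical map forces `b ∘ c = -b`. -/
lemma bc_neg {lam : K} {c : V ⊗[K] V →ₗ[K] V ⊗[K] V} {b : V ⊗[K] V →ₗ[K] V}
    (hcc : c ∘ₗ c = (lam - 1) • c + lam • LinearMap.id)
    (hinj : Function.Injective (envIota lam c b)) :
    b ∘ₗ c = -b := by
  set T : V ⊗[K] V →ₗ[K] RingQuot (envRel lam c b) :=
    (RingQuot.mkAlgHom K (envRel lam c b)).toLinearMap ∘ₗ tensMul with hT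
  have hrel : ∀ z : V ⊗[K] V, T (c z) = lam • T z + envIota lam c b (b z) := by
    intro z
    have hrw : envRel lam c b (tensMul (c z))
        (lam • tensMul z + TensorAlgebra.ι K (b z)) := ⟨z, rfl, rfl⟩
    have h := RingQuot.mkAlgHom_rel K hrw
    simp only [hT, envIota, LinearMap.comp_apply, AlgHom.toLinearMap_apply, map_add,
      map_smul] at h ⊢
    exact h
  apply LinearMap.ext; intro z
  show b (c z) = -(b z)
  rw [← sub_eq_zero, sub_neg_eq_add]
  apply hinj
  show envIota lam c b (b (c z) + b z) = envIota lam c b 0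
  rw [map_zero]
  have h1 := hrel (c z)
  have h2 := hrel z
  have hc2 : c (c z) = (lam - 1) • c z + lam • z := by
    have := congrArg (fun f => f z) hcc
    simpa using this
  rw [hc2, map_add, map_smul, map_smul, h2] at h1
  have : envIota lam c b (b (c z)) + envIota lam c b (b z) = 0 := by
    linear_combination (norm := module) -h1
  rw [← map_add] at this
  exact this

/-- The main operator computation: `b₁ = -b₂`. -/
lemma opB1_eq_neg_opB2 {lam : K} (hlam0 : lam ≠ 0) (hlam1 : lam ≠ 1)
    (hq3 : (1 : K) + lam + lam * lam ≠ 0)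
    {c : V ⊗[K] V →ₗ[K] V ⊗[K] V} (hbraid : BraidEq c)
    (hcc : c ∘ₗ c = (lam - 1) • c + lam • LinearMap.id)
    {b : V ⊗[K] V →ₗ[K] V} (hb : IsBracket c b) (hbc : b ∘ₗ c = -b) :
    opB1 b = -opB2 b := by
  set C1 := opC1 c
  set C2 := opC2 c
  set B1 := opB1 b
  set B2 := opB2 b
  have hcancel : ∀ (a : K), a ≠ 0 → ∀ (y : V ⊗[K] V), a • y = 0 → y = 0 := by
    intro a ha y hy
    simpa [smul_smul, inv_mul_cancel₀ ha] using congrArg (fun t => a⁻¹ • t) hy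
  have hA1 : ∀ x, c (B1 x) = B2 (C1 (C2 x)) := by
    intro x
    have := congrArg (fun f => f x) hb.1
    simpa [LinearMap.comp_apply] using this
  have hA2 : ∀ x, c (B2 x) = B1 (C2 (C1 x)) := by
    intro x
    have := congrArg (fun f => f x) hb.2
    simpa [LinearMap.comp_apply] using this
  have hbr : ∀ x, C1 (C2 (C1 x)) = C2 (C1 (C2 x)) := by
    intro x
    have := congrArg (fun f => f x) hbraid
    simpa [LinearMap.comp_apply] using this
  have h1sq : ∀ x, C1 (C1 x) = (lam - 1) • C1 x + lam • x := opC1_sq hcc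
  have h2sq : ∀ x, C2 (C2 x) = (lam - 1) • C2 x + lam • x := opC2_sq hcc
  have hB1C1 : ∀ x, B1 (C1 x) = -(B1 x) := opB1_c hbc
  have hB2C2 : ∀ x, B2 (C2 x) = -(B2 x) := opB2_c hbc
  have hccp : ∀ z, c (c z) = (lam - 1) • c z + lam • z := by
    intro z
    have := congrArg (fun f => f z) hcc
    simpa [LinearMap.comp_apply] using this
  have E1 : ∀ x, c (B1 x) + c (B2 x) = lam • B1 (C2 x) + lam • B1 x := by
    intro x
    have e1a : c (c (B1 x)) = (lam - 1) • c (B1 x) + lam • B1 x := hccp _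
    have e1b : c (c (B1 x))
        = -((lam - 1) • c (B2 x)) + (lam * (lam - 1)) • B1 (C2 x)
          + (lam * lam) • B1 x := by
      rw [hA1 x, hA2 (C1 (C2 x))]
      rw [h1sq (C2 x)]
      rw [map_add, map_smul, map_smul, map_add, map_smul, map_smul]
      rw [← hbr x, hB1C1 (C2 (C1 x)), ← hA2 x, h2sq x]
      rw [map_add, map_smul, map_smul]
      module
    have key : (lam - 1) • (c (B1 x) + c (B2 x) - lam • B1 (C2 x) - lam • B1 x) = 0 := by
      linear_combination (norm := module) e1b - e1a
    have := hcancel _ (sub_ne_zero.mpr hlam1) _ key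
    linear_combination (norm := module) this
  have E2 : ∀ x, c (B1 x) + c (B2 x) = lam • B2 (C1 x) + lam • B2 x := by
    intro x
    have e2a : c (c (B2 x)) = (lam - 1) • c (B2 x) + lam • B2 x := hccp _
    have e2b : c (c (B2 x))
        = -((lam - 1) • c (B1 x)) + (lam * (lam - 1)) • B2 (C1 x)
          + (lam * lam) • B2 x := by
      rw [hA2 x, hA1 (C2 (C1 x))]
      rw [h2sq (C1 x)]
      rw [map_add, map_smul, map_smul, map_add, map_smul, map_smul]
      rw [hbr x, hB2C2 (C1 (C2 x)), ← hA1 x, h1sq x]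
      rw [map_add, map_smul, map_smul]
      module
    have key : (lam - 1) • (c (B1 x) + c (B2 x) - lam • B2 (C1 x) - lam • B2 x) = 0 := by
      linear_combination (norm := module) e2b - e2a
    have := hcancel _ (sub_ne_zero.mpr hlam1) _ key
    linear_combination (norm := module) this
  have F : ∀ x, B2 (C1 x) = B1 (C2 x) + B1 x - B2 x := by
    intro x
    have key : lam • (B2 (C1 x) - (B1 (C2 x) + B1 x - B2 x)) = 0 := by
      linear_combination (norm := module) E1 x - E2 x
    have := hcancel _ hlam0 _ key
    linear_combination (norm := module) this
  have G1 : ∀ x, c (B1 x) = lam • B1 (C2 x) + lam • B1 x + B2 x := by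
    intro x
    have h := F (C2 x)
    rw [← hA1 x, h2sq x, map_add, map_smul, map_smul, hB2C2 x] at h
    linear_combination (norm := module) h
  have X6 : ∀ x, c (B2 x) = -(B2 x) := by
    intro x
    linear_combination (norm := module) E1 x - G1 x
  have H2 : ∀ x, lam • B2 (C1 x) = -(B1 x) - (lam + 1) • B2 x := by
    intro x
    have h := F (C1 x)
    rw [h1sq x, map_add, map_smul, map_smul, ← hA2 x, hB1C1 x, X6 x] at h
    linear_combination (norm := module) h
  have X5 : ∀ x, c (B1 x) = -(B1 x) := by
    intro x
    linear_combination (norm := module) E2 x + H2 x - X6 x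
  have H1 : ∀ x, lam • B1 (C2 x) = -((lam + 1) • B1 x) - B2 x := by
    intro x
    linear_combination (norm := module) X5 x + X6 x - E1 x
  have S1 : ∀ x, (lam * lam + 1) • B1 (C2 x) + (lam * lam) • B1 x - B2 x = 0 := by
    intro x
    have h := H1 (C2 x)
    rw [h2sq x, map_add, map_smul, map_smul, hB2C2 x] at h
    linear_combination (norm := module) h
  apply LinearMap.ext; intro x
  rw [LinearMap.neg_apply]
  have key : (1 + lam + lam * lam) • (B1 x + B2 x) = 0 := by
    linear_combination (norm := module) (lam * lam + 1) • H1 x - lam • S1 x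
  have := hcancel _ hq3 _ key
  show B1 x = -B2 x
  linear_combination (norm := module) this

/-- **Theorem (triviality of brackets).**  If `char K ≠ 2`, `(V,c)` is a braided vector
space of Hecke type of mark `lam ≠ 0, 1` with `(3)!_lam ≠ 0`, `b` is a `c`-bracket, and the
canonical map `ι_{c,b} : V → U(V,c,b)` is injective, then `b = 0`. -/
theorem bracket_eq_zero_of_envIota_injective
    (hchar : ringChar K ≠ 2) (lam : K) (hlam0 : lam ≠ 0) (hlam1 : lam ≠ 1)
    (hfac : qFac lam 3 ≠ 0)
    (c : V ⊗[K] V →ₗ[K] V ⊗[K] V) (hbraid : BraidEq c) (hHecke : IsHecke lam c)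
    (b : V ⊗[K] V →ₗ[K] V) (hb : IsBracket c b)
    (hinj : Function.Injective (envIota lam c b)) :
    b = 0 := by
  have htwo : (2 : K) ≠ 0 := Ring.two_ne_zero hchar
  have hcc := heckeSq hHecke
  have hbc : b ∘ₗ c = -b := bc_neg hcc hinj
  have hq3 : (1 : K) + lam + lam * lam ≠ 0 := by
    intro h
    apply hfac
    have h3 : qInt lam 3 = 1 + lam + lam * lam := by
      simp [qInt, Finset.sum_range_succ]
      ring
    simp [qFac, Finset.prod_range_succ, h3, h]
  have h12 : opB1 b = -opB2 b := opB1_eq_neg_opB2 hlam0 hlam1 hq3 hbraid hcc hb hbc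
  -- pointwise consequence
  have hP : ∀ u v w : V, b (u ⊗ₜ v) ⊗ₜ[K] w = -(u ⊗ₜ[K] b (v ⊗ₜ w)) := by
    intro u v w
    have := congrArg (fun f => f (u ⊗ₜ (v ⊗ₜ w))) h12
    simpa [opB1, opB2, LinearMap.comp_apply] using this
  -- contraction with a dual vector in the first slot
  set D : Module.Dual K V → (V ⊗[K] V →ₗ[K] V) := fun φ =>
    TensorProduct.lift ((LinearMap.lsmul K V) ∘ₗ φ) with hDdef
  have hD : ∀ (φ : Module.Dual K V) (u w : V), D φ (u ⊗ₜ w) = φ u • w := by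
    intro φ u w
    simp [hDdef, TensorProduct.lift.tmul]
  have hP2 : ∀ (φ : Module.Dual K V) (u v w : V),
      φ (b (u ⊗ₜ v)) • w = -(φ u • b (v ⊗ₜ w)) := by
    intro φ u v w
    have := congrArg (D φ) (hP u v w)
    rw [map_neg, hD, hD] at this
    exact this
  by_contra hbne
  have hex : ∃ v w : V, b (v ⊗ₜ w) ≠ 0 := by
    by_contra h
    push_neg at h
    apply hbne
    apply TensorProduct.ext'
    intro v w
    simp [h v w]
  obtain ⟨v0, w0, hy⟩ := hex
  have hv0 : v0 ≠ 0 := by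
    rintro rfl
    apply hy
    rw [TensorProduct.zero_tmul, map_zero]
  have hw0 : w0 ≠ 0 := by
    rintro rfl
    apply hy
    rw [TensorProduct.tmul_zero, map_zero]
  obtain ⟨φ0, hφ0⟩ : ∃ φ : Module.Dual K V, φ v0 ≠ 0 := by
    by_contra h
    push_neg at h
    exact hv0 ((Module.forall_dual_apply_eq_zero_iff K v0).mp h)
  set a : K := φ0 v0 with ha
  set s : K := -((φ0 v0)⁻¹ * φ0 (b (v0 ⊗ₜ v0))) with hs_def
  have hy_eq : b (v0 ⊗ₜ w0) = s • w0 := by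
    have h := hP2 φ0 v0 v0 w0
    -- φ0 (b (v0⊗v0)) • w0 = -(φ0 v0 • b (v0 ⊗ w0))
    have h2 : φ0 v0 • b (v0 ⊗ₜ w0) = -(φ0 (b (v0 ⊗ₜ v0)) • w0) := by
      linear_combination (norm := module) h
    have h3 := congrArg (fun t => (φ0 v0)⁻¹ • t) h2
    simp only [smul_smul, inv_mul_cancel₀ (show φ0 v0 ≠ 0 from hφ0), one_smul, smul_neg] at h3
    rw [h3, hs_def]
    module
  have hs : s ≠ 0 := by
    intro h
    apply hy
    rw [hy_eq, h, zero_smul]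
  -- Step B : b (u ⊗ v0) = -(s • u) for all u
  have hB : ∀ u : V, b (u ⊗ₜ v0) = -(s • u) := by
    intro u
    have hzero : b (u ⊗ₜ v0) + s • u = 0 := by
      apply (Module.forall_dual_apply_eq_zero_iff K _).mp
      intro φ
      have h := hP2 φ u v0 w0
      rw [hy_eq] at h
      have hsc : (φ (b (u ⊗ₜ v0)) + s * φ u) • w0 = 0 := by
        linear_combination (norm := module) h
      rcases smul_eq_zero.mp hsc with h' | h'
      · simpa [map_add, map_smul, mul_comm] using h'
      · exact absurd h' hw0
    linear_combination (norm := module) hzero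
  -- Step C : b (v0 ⊗ w) = s • w for all w
  have hC : ∀ w : V, b (v0 ⊗ₜ w) = s • w := by
    intro w
    have h := hP v0 v0 w
    rw [hB v0] at h
    -- h : (-(s • v0)) ⊗ₜ w = -(v0 ⊗ₜ b (v0 ⊗ₜ w))
    have h0 : v0 ⊗ₜ[K] (b (v0 ⊗ₜ w) - s • w) = 0 := by
      rw [TensorProduct.tmul_sub]
      have h1 : v0 ⊗ₜ[K] b (v0 ⊗ₜ w) = v0 ⊗ₜ[K] (s • w) := by
        have h2 := congrArg Neg.neg h
        rw [neg_neg] at h2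
        rw [← h2]
        rw [TensorProduct.neg_tmul, neg_neg, TensorProduct.smul_tmul, TensorProduct.tmul_smul]
      rw [h1, sub_self]
    have h3 := congrArg (D φ0) h0
    rw [hD, map_zero] at h3
    rcases smul_eq_zero.mp h3 with h' | h'
    · exact absurd h' hφ0
    · linear_combination (norm := module) h'
  -- Step D : contradiction
  have hd1 := hB v0
  have hd2 := hC v0
  have hkey : (2 * s) • v0 = 0 := by
    linear_combination (norm := module) hd1 - hd2
  rcases smul_eq_zero.mp hkey with h' | h'
  · exact (mul_ne_zero htwo hs) h'
  · exact hv0 h'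

end
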